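/- Let N ≥ 2 and let U_d be the random diagonal unitary on ℂ^N ⊗ ℂ^N whose N² diagonal entries are e^{iθ_k} with θ_1, …, θ_{N²} independent and uniformly distributed on [0, 2π). Then the expectation of the purity X(U_d) = tr(ρ_R(U_d)²) over the random phases equals (2N−1)/N². -/

import Mathlib

open Matrix MeasureTheory
open scoped Kronecker

noncomputable section

instance {m n R : Type*} [TopologicalSpace R] : MeasurableSpace (Matrix m n R) := borel _
instance {m n R : Type*} [TopologicalSpace R] : BorelSpace (Matrix m n R) := ⟨rfl⟩

/-- Reshuffling: `(U_R)_{(i,j),(α,β)} = U_{(i,α),(j,β)}`. -/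
def reshuffle (N : ℕ) (U : Matrix (Fin N × Fin N) (Fin N × Fin N) ℂ) :
    Matrix (Fin N × Fin N) (Fin N × Fin N) ℂ :=
  Matrix.of fun p q => U (p.1, q.1) (p.2, q.2)

/-- Partial transpose: `(U_Γ)_{(j,α),(i,β)} = U_{(i,α),(j,β)}`. -/
def ptransp (N : ℕ) (U : Matrix (Fin N × Fin N) (Fin N × Fin N) ℂ) :
    Matrix (Fin N × Fin N) (Fin N × Fin N) ℂ :=
  Matrix.of fun p q => U (q.1, p.2) (p.1, q.2)

/-- The swap gate `S(x ⊗ y) = y ⊗ x`. -/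
def swapGate (N : ℕ) : Matrix (Fin N × Fin N) (Fin N × Fin N) ℂ :=
  Matrix.of fun p q => if p.1 = q.2 ∧ p.2 = q.1 then 1 else 0

/-- `ρ_R(U) = U_R U_R† / N²`. -/
def rhoR (N : ℕ) (U : Matrix (Fin N × Fin N) (Fin N × Fin N) ℂ) :
    Matrix (Fin N × Fin N) (Fin N × Fin N) ℂ :=
  ((N : ℂ) ^ 2)⁻¹ • (reshuffle N U * (reshuffle N U)ᴴ)

/-- `ρ_T(U) = S U_Γ U_Γ† S / N²`. -/
def rhoT (N : ℕ) (U : Matrix (Fin N × Fin N) (Fin N × Fin N) ℂ) :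
    Matrix (Fin N × Fin N) (Fin N × Fin N) ℂ :=
  ((N : ℂ) ^ 2)⁻¹ • (swapGate N * (ptransp N U * (ptransp N U)ᴴ) * swapGate N)

/-- Purity `X(U) = tr(ρ_R(U)²)` (a real number). -/
def Xpur (N : ℕ) (U : Matrix (Fin N × Fin N) (Fin N × Fin N) ℂ) : ℝ :=
  ((rhoR N U * rhoR N U).trace).re

/-- Purity `Y(U) = tr(ρ_T(U)²)` (a real number). -/
def Ypur (N : ℕ) (U : Matrix (Fin N × Fin N) (Fin N × Fin N) ℂ) : ℝ :=
  ((rhoT N U * rhoT N U).trace).re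

/-- Entangling power `e_p(U)`. -/
def ep (N : ℕ) (U : Matrix (Fin N × Fin N) (Fin N × Fin N) ℂ) : ℝ :=
  ((N : ℝ) ^ 2 / ((N : ℝ) + 1) ^ 2) *
    ((1 - Xpur N U) + (1 - Ypur N U) - ((N : ℝ) ^ 2 - 1) / (N : ℝ) ^ 2)

/-- Gate typicality `g_t(U)`. -/
def gateTyp (N : ℕ) (U : Matrix (Fin N × Fin N) (Fin N × Fin N) ℂ) : ℝ :=
  ((N : ℝ) ^ 2 / ((N : ℝ) ^ 2 - 1)) *
    (Ypur N U - Xpur N U + ((N : ℝ) ^ 2 - 1) / (N : ℝ) ^ 2)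

/-- Mean entangling power over the Haar measure, `ē_p = (N-1)²/(N²+1)`. -/
def epBar (N : ℕ) : ℝ := ((N : ℝ) - 1) ^ 2 / ((N : ℝ) ^ 2 + 1)

/-- `iterGate U W k = U · W_{k-1} · U ⋯ W_0 · U`, i.e. `U^(k+1)` with `k` interlacing
local gates `W_0, …, W_{k-1}`. -/
def iterGate {D : Type*} [Fintype D] [DecidableEq D] (U : Matrix D D ℂ)
    (W : ℕ → Matrix D D ℂ) : ℕ → Matrix D D ℂ
  | 0 => U
  | k + 1 => U * W k * iterGate U W k

/-- The uniform probability measure on `[0, 2π)`. -/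
def uniformPhase : Measure ℝ :=
  (ENNReal.ofReal (2 * Real.pi))⁻¹ • volume.restrict (Set.Ico 0 (2 * Real.pi))


namespace DiagPurity


instance : IsProbabilityMeasure uniformPhase := by
  constructor
  rw [uniformPhase]
  simp [Real.volume_Ico]
  rw [ENNReal.inv_mul_cancel]
  · simp [Real.pi_pos, Real.pi_ne_zero]
  · exact ENNReal.mul_ne_top (by simp) ENNReal.ofReal_ne_top

lemma integral_exp_int (n : ℤ) :
    ∫ x, Complex.exp ((n : ℂ) * Complex.I * x) ∂uniformPhase
      = if n = 0 then 1 else 0 := by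
  rw [uniformPhase, integral_smul_measure]
  split_ifs with hn
  · subst hn
    simp only [Int.cast_zero, zero_mul, Complex.exp_zero]
    rw [integral_const]
    simp [Real.volume_Ico, ENNReal.toReal_inv, Real.pi_pos.le]
    field_simp
  · have h2 : (0:ℝ) ≤ 2 * Real.pi := by positivity
    rw [MeasureTheory.integral_Ico_eq_integral_Ioo, ← MeasureTheory.integral_Ioc_eq_integral_Ioo,
      ← intervalIntegral.integral_of_le h2,
      integral_exp_mul_complex (by simp [Complex.ext_iff, hn] : (n:ℂ) * Complex.I ≠ 0)]
    have : (n:ℂ) * Complex.I * ((2 * Real.pi : ℝ):ℂ) = (n:ℂ) * (2 * Real.pi * Complex.I) := by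
      push_cast; ring
    rw [this, Complex.exp_int_mul_two_pi_mul_I]
    simp

def PhaseSp : Type := ℝ

instance : MeasureSpace PhaseSp :=
  { toMeasurableSpace := (inferInstance : MeasurableSpace ℝ), volume := uniformPhase }

instance : IsProbabilityMeasure (volume : Measure PhaseSp) :=
  (inferInstance : IsProbabilityMeasure uniformPhase)

instance : SigmaFinite (volume : Measure PhaseSp) := by
  have : IsFiniteMeasure (volume : Measure PhaseSp) := inferInstance
  infer_instance

lemma pi_integral_prod {ι : Type*} [Fintype ι] (f : ι → ℝ → ℂ) :
    ∫ θ : ι → ℝ, ∏ p, f p (θ p) ∂(Measure.pi fun _ => uniformPhase)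
      = ∏ p, ∫ x, f p x ∂uniformPhase :=
  MeasureTheory.integral_fintype_prod_eq_prod (𝕜 := ℂ) (ι := ι) (E := fun _ => PhaseSp) (μ := fun _ => (volume : Measure PhaseSp)) f

section term
variable {N : ℕ}

def coefFn (i k α β : Fin N) : Fin N × Fin N → ℤ := fun p =>
  (if p = (i,α) then 1 else 0) + (if p = (k,β) then 1 else 0)
    - (if p = (k,α) then 1 else 0) - (if p = (i,β) then 1 else 0)

lemma coef_sum (i k α β : Fin N) (θ : Fin N × Fin N → ℝ) :
    ∑ p, (coefFn i k α β p : ℝ) * θ p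
      = θ (i,α) - θ (k,α) + θ (k,β) - θ (i,β) := by
  simp only [coefFn]
  push_cast
  simp only [sub_mul, add_mul, ite_mul, one_mul, zero_mul,
    Finset.sum_sub_distrib, Finset.sum_add_distrib, Finset.sum_ite_eq', Finset.mem_univ,
    if_true]
  ring

lemma term_eq_prod (i k α β : Fin N) (θ : Fin N × Fin N → ℝ) :
    Complex.exp (Complex.I *
        ((θ (i,α) : ℂ) - θ (k,α) + θ (k,β) - θ (i,β)))
      = ∏ p, Complex.exp ((coefFn i k α β p : ℂ) * Complex.I * (θ p)) := by
  rw [← Complex.exp_sum]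
  congr 1
  have : ∑ p, (coefFn i k α β p : ℂ) * Complex.I * (θ p : ℂ)
      = Complex.I * ((∑ p, (coefFn i k α β p : ℝ) * θ p : ℝ) : ℂ) := by
    push_cast
    rw [Finset.mul_sum]
    exact Finset.sum_congr rfl fun p _ => by ring
  rw [this, coef_sum]
  push_cast
  ring

lemma coef_zero_iff (i k α β : Fin N) :
    (∀ p, coefFn i k α β p = 0) ↔ (i = k ∨ α = β) := by
  constructor
  · intro h
    by_contra hc
    push_neg at hc
    have h1 := h (i, α)
    simp [coefFn, Prod.ext_iff, hc.1, hc.2, Ne.symm hc.1, Ne.symm hc.2] at h1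
  · rintro (rfl | rfl) <;> intro p <;> simp [coefFn]

lemma term_integral (i k α β : Fin N) :
    ∫ θ : Fin N × Fin N → ℝ,
        Complex.exp (Complex.I * ((θ (i,α) : ℂ) - θ (k,α) + θ (k,β) - θ (i,β)))
        ∂(Measure.pi fun _ => uniformPhase)
      = if i = k ∨ α = β then 1 else 0 := by
  have hfe : (fun θ : Fin N × Fin N → ℝ =>
      Complex.exp (Complex.I * ((θ (i,α) : ℂ) - θ (k,α) + θ (k,β) - θ (i,β))))
      = fun θ => ∏ p, Complex.exp ((coefFn i k α β p : ℂ) * Complex.I * (θ p)) :=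
    funext fun θ => term_eq_prod i k α β θ
  rw [hfe, pi_integral_prod (f := fun p x => Complex.exp ((coefFn i k α β p : ℂ) * Complex.I * x))]
  simp_rw [integral_exp_int]
  by_cases h : i = k ∨ α = β
  · have := (coef_zero_iff i k α β).2 h
    simp [h, this]
  · rw [if_neg h]
    refine Finset.prod_eq_zero (Finset.mem_univ (i, α)) ?_
    have : ¬(i = k ∨ α = β) := h
    push_neg at this
    simp [coefFn, Prod.ext_iff, this.1, this.2, Ne.symm this.1, Ne.symm this.2]

end term

variable {N : ℕ}


lemma reshA_apply (u : Fin N × Fin N → ℂ) (p r : Fin N × Fin N) :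
    (reshuffle N (diagonal u) * (reshuffle N (diagonal u))ᴴ) p r
      = if p.1 = p.2 ∧ r.1 = r.2 then ∑ a, u (p.1, a) * (starRingEnd ℂ) (u (r.1, a)) else 0 := by
  rw [mul_apply]
  simp only [conjTranspose_apply, reshuffle, of_apply, diagonal_apply, Prod.ext_iff]
  rw [Fintype.sum_prod_type]
  by_cases h1 : p.1 = p.2 <;> by_cases h2 : r.1 = r.2 <;>
    simp [h1, h2, Finset.sum_ite_eq', mul_comm]

lemma trace_formula (u : Fin N × Fin N → ℂ) :
    (rhoR N (diagonal u) * rhoR N (diagonal u)).trace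
      = ((N:ℂ)^2)⁻¹ * ((N:ℂ)^2)⁻¹ *
        ∑ i, ∑ k, ∑ a, ∑ b,
          u (i,a) * (starRingEnd ℂ) (u (k,a)) * (u (k,b) * (starRingEnd ℂ) (u (i,b))) := by
  set A := reshuffle N (diagonal u) * (reshuffle N (diagonal u))ᴴ with hA
  have h1 : rhoR N (diagonal u) * rhoR N (diagonal u)
      = (((N:ℂ)^2)⁻¹ * ((N:ℂ)^2)⁻¹) • (A * A) := by
    rw [rhoR, smul_mul_assoc, mul_smul_comm, smul_smul]
  rw [h1, trace_smul, smul_eq_mul]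
  congr 1
  have h2 : (A * A).trace = ∑ p, ∑ r, A p r * A r p := by
    simp [Matrix.trace, Matrix.diag, mul_apply]
  rw [h2]
  simp only [hA, reshA_apply]
  rw [Fintype.sum_prod_type]
  simp only [Fintype.sum_prod_type]
  simp only [ite_mul, mul_ite, mul_zero, zero_mul]
  refine Finset.sum_congr rfl fun i _ => ?_
  rw [Finset.sum_comm]
  refine Finset.sum_congr rfl fun k _ => ?_
  have hpt : ∀ j l : Fin N,
      (if k = l ∧ i = j then
        (if i = j ∧ k = l then
          (∑ a, u (i, a) * (starRingEnd ℂ) (u (k, a))) *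
            ∑ b, u (k, b) * (starRingEnd ℂ) (u (i, b)) else 0) else 0)
      = (if l = k then (if j = i then
          (∑ a, u (i, a) * (starRingEnd ℂ) (u (k, a))) *
            ∑ b, u (k, b) * (starRingEnd ℂ) (u (i, b)) else 0) else 0) := by
    intro j l
    by_cases h1 : j = i
    · subst h1
      by_cases h2 : l = k
      · subst h2; simp
      · simp [h2, Ne.symm h2]
    · have h1' : ¬ i = j := fun h => h1 h.symm
      simp [h1, h1']
  simp_rw [hpt, Finset.sum_ite_eq', Finset.mem_univ, if_true, Finset.sum_mul_sum]
  simp only [Finset.sum_ite_eq', Finset.mem_univ, if_true]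

lemma Xpur_diagonal (θ : Fin N × Fin N → ℝ) :
    Xpur N (Matrix.diagonal fun p => Complex.exp (Complex.I * (θ p : ℂ)))
      = (((N:ℂ)^2)⁻¹ * ((N:ℂ)^2)⁻¹ *
          ∑ i, ∑ k, ∑ a, ∑ b,
            Complex.exp (Complex.I *
              ((θ (i,a) : ℂ) - θ (k,a) + θ (k,b) - θ (i,b)))).re := by
  rw [Xpur, trace_formula]
  congr 2
  refine Finset.sum_congr rfl fun i _ => Finset.sum_congr rfl fun k _ =>
    Finset.sum_congr rfl fun a _ => Finset.sum_congr rfl fun b _ => ?_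
  rw [← Complex.exp_conj, ← Complex.exp_conj,
    ← Complex.exp_add, ← Complex.exp_add, ← Complex.exp_add]
  congr 1
  simp only [_root_.map_mul, Complex.conj_I, Complex.conj_ofReal]
  ring


lemma term_integrable (i k a b : Fin N) :
    Integrable (fun θ : Fin N × Fin N → ℝ =>
        Complex.exp (Complex.I * ((θ (i,a) : ℂ) - θ (k,a) + θ (k,b) - θ (i,b))))
      (Measure.pi fun _ : Fin N × Fin N => uniformPhase) := by
  have hc : Continuous fun θ : Fin N × Fin N → ℝ =>
      Complex.exp (Complex.I * ((θ (i,a) : ℂ) - θ (k,a) + θ (k,b) - θ (i,b))) := by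
    fun_prop
  refine ⟨hc.aestronglyMeasurable, ?_⟩
  apply MeasureTheory.HasFiniteIntegral.of_bounded (C := 1)
  filter_upwards with θ
  rw [Complex.norm_exp]
  simp [Complex.mul_re]

lemma count_lemma (N : ℕ) :
    (∑ i : Fin N, ∑ k : Fin N, ∑ a : Fin N, ∑ b : Fin N,
        if i = k ∨ a = b then (1:ℂ) else 0)
      = 2 * (N:ℂ)^3 - (N:ℂ)^2 := by
  have inner : ∀ i k : Fin N,
      (∑ a : Fin N, ∑ b : Fin N, if i = k ∨ a = b then (1:ℂ) else 0)
        = if i = k then (N:ℂ)^2 else (N:ℂ) := by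
    intro i k
    by_cases h : i = k
    · simp [h, Finset.card_univ]
      ring
    · simp [h, Finset.sum_ite_eq, Finset.card_univ]
  simp_rw [inner]
  have middle : ∀ i : Fin N,
      (∑ k : Fin N, if i = k then (N:ℂ)^2 else (N:ℂ))
        = (N:ℂ) * (N:ℂ) + ((N:ℂ)^2 - (N:ℂ)) := by
    intro i
    have : ∀ k : Fin N, (if i = k then (N:ℂ)^2 else (N:ℂ))
        = (N:ℂ) + (if i = k then (N:ℂ)^2 - (N:ℂ) else 0) := by
      intro k; split_ifs <;> ring
    simp_rw [this, Finset.sum_add_distrib, Finset.sum_ite_eq, Finset.mem_univ, if_true,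
      Finset.sum_const, Finset.card_univ, Fintype.card_fin, nsmul_eq_mul]
  simp_rw [middle, Finset.sum_const, Finset.card_univ, Fintype.card_fin, nsmul_eq_mul]
  ring

end DiagPurity

open DiagPurity in
/-- For a random diagonal unitary on `ℂ^N ⊗ ℂ^N` with independent
uniformly distributed phases, the expectation of the purity `X = tr(ρ_R²)` equals
`(2N-1)/N²`. -/
theorem diagonal_unitary_average_purity (N : ℕ) (hN : 2 ≤ N) :
    (∫ θ : Fin N × Fin N → ℝ,
        Xpur N (Matrix.diagonal fun p => Complex.exp (Complex.I * (θ p : ℂ)))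
        ∂(Measure.pi fun _ => uniformPhase))
      = (2 * (N : ℝ) - 1) / (N : ℝ) ^ 2 := by
  have hμ : IsProbabilityMeasure uniformPhase := inferInstance
  simp_rw [DiagPurity.Xpur_diagonal]
  set c : ℂ := ((N:ℂ)^2)⁻¹ * ((N:ℂ)^2)⁻¹ with hc
  set μpi : Measure (Fin N × Fin N → ℝ) := Measure.pi fun _ => uniformPhase with hμpi
  have hS : Integrable (fun θ : Fin N × Fin N → ℝ =>
      ∑ i : Fin N, ∑ k : Fin N, ∑ a : Fin N, ∑ b : Fin N,
        Complex.exp (Complex.I * ((θ (i,a) : ℂ) - θ (k,a) + θ (k,b) - θ (i,b)))) μpi := by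
    apply integrable_finset_sum; intro i _
    apply integrable_finset_sum; intro k _
    apply integrable_finset_sum; intro a _
    apply integrable_finset_sum; intro b _
    exact term_integrable i k a b
  have hint : Integrable (fun θ : Fin N × Fin N → ℝ =>
      c * ∑ i : Fin N, ∑ k : Fin N, ∑ a : Fin N, ∑ b : Fin N,
        Complex.exp (Complex.I * ((θ (i,a) : ℂ) - θ (k,a) + θ (k,b) - θ (i,b)))) μpi :=
    hS.const_mul c
  have hre := _root_.integral_re (μ := μpi) hint
  simp only [RCLike.re_to_complex] at hre
  rw [hre, MeasureTheory.integral_const_mul]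
  rw [MeasureTheory.integral_finset_sum _ (fun i _ => by
    apply integrable_finset_sum; intro k _
    apply integrable_finset_sum; intro a _
    apply integrable_finset_sum; intro b _
    exact term_integrable i k a b)]
  have h4 : ∀ i : Fin N,
      (∫ θ : Fin N × Fin N → ℝ, ∑ k : Fin N, ∑ a : Fin N, ∑ b : Fin N,
        Complex.exp (Complex.I * ((θ (i,a) : ℂ) - θ (k,a) + θ (k,b) - θ (i,b))) ∂μpi)
      = ∑ k : Fin N, ∑ a : Fin N, ∑ b : Fin N, (if i = k ∨ a = b then (1:ℂ) else 0) := by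
    intro i
    rw [MeasureTheory.integral_finset_sum _ (fun k _ => by
      apply integrable_finset_sum; intro a _
      apply integrable_finset_sum; intro b _
      exact term_integrable i k a b)]
    refine Finset.sum_congr rfl fun k _ => ?_
    rw [MeasureTheory.integral_finset_sum _ (fun a _ => by
      apply integrable_finset_sum; intro b _
      exact term_integrable i k a b)]
    refine Finset.sum_congr rfl fun a _ => ?_
    rw [MeasureTheory.integral_finset_sum _ (fun b _ => term_integrable i k a b)]
    exact Finset.sum_congr rfl fun b _ => term_integral i k a b
  rw [Finset.sum_congr rfl (fun i _ => h4 i), count_lemma]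
  have hNne : (N:ℂ) ≠ 0 := by
    have : (0:ℕ) < N := by omega
    exact_mod_cast Nat.cast_ne_zero.mpr (by omega)
  have harith : c * (2 * (N:ℂ)^3 - (N:ℂ)^2)
      = (((2 * (N:ℝ) - 1) / (N:ℝ)^2 : ℝ) : ℂ) := by
    rw [hc]
    push_cast
    field_simp
  rw [harith, Complex.ofReal_re]
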